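/- Let G be a graph with minimum degree at least 3, B a maximal 2-connected block of G, and v any vertex of B. Then every edge of B is revealed by v. -/

import Mathlib

open SimpleGraph

variable {V : Type*}

/-- A walk is non-backtracking if no vertex equals the vertex two steps later. -/
def NonBacktracking {G : SimpleGraph V} {u v : V} (p : G.Walk u v) : Prop :=
  ∀ i : ℕ, i + 2 < p.support.length → p.support[i]? ≠ p.support[i + 2]?

/-- The weight of a walk: the sum of the weights of its edges, with multiplicity. -/
def walkWeight {G : SimpleGraph V} (F : Sym2 V → ℝ) {u v : V} (p : G.Walk u v) : ℝ :=
  (p.edges.map F).sum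

/-- An edge `e` is revealed by a set `S` of vertices if an integer combination of weights of
closed non-backtracking walks from vertices of `S` equals a nonzero multiple of the weight
of `e`, for every weight function. -/
def RevealedBySet (G : SimpleGraph V) (S : Set V) (e : Sym2 V) : Prop :=
  ∃ (l : ℕ) (w : Fin l → V) (W : ∀ i, G.Walk (w i) (w i)) (c : Fin l → ℤ) (ce : ℤ),
    (∀ i, w i ∈ S) ∧ (∀ i, NonBacktracking (W i)) ∧ (∀ i, c i ≠ 0) ∧ ce ≠ 0 ∧
    ∀ F : Sym2 V → ℝ, ∑ i, (c i : ℝ) * walkWeight F (W i) = (ce : ℝ) * F e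

/-- A walk `W` is revealed by the vertex `v`. -/
def WalkRevealedBy (G : SimpleGraph V) (v : V) {a b : V} (W : G.Walk a b) : Prop :=
  ∃ (l : ℕ) (Ws : Fin l → G.Walk v v) (c : Fin l → ℤ) (cW : ℤ),
    (∀ i, NonBacktracking (Ws i)) ∧ (∀ i, c i ≠ 0) ∧ cW ≠ 0 ∧
    ∀ F : Sym2 V → ℝ, ∑ i, (c i : ℝ) * walkWeight F (Ws i) = (cW : ℝ) * walkWeight F W

/-- `G` is odometric: every edge is revealed by every single vertex. -/
def Odometric (G : SimpleGraph V) : Prop :=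
  ∀ v : V, ∀ e ∈ G.edgeSet, RevealedBySet G {v} e

/-- `u` is a cut vertex of `G`. -/
def IsCutVertex (G : SimpleGraph V) (u : V) : Prop :=
  G.Connected ∧ ¬ (G.induce {x : V | x ≠ u}).Connected

/-- The induced subgraph on `B` is 2-connected. -/
def TwoConnectedOn (G : SimpleGraph V) (B : Set V) : Prop :=
  3 ≤ B.ncard ∧ (G.induce B).Connected ∧ ∀ u ∈ B, (G.induce (B \ {u})).Connected

/-- `B` is a maximal 2-connected block of `G`. -/
def IsBlock (G : SimpleGraph V) (B : Set V) : Prop :=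
  TwoConnectedOn G B ∧ ∀ B', B ⊆ B' → TwoConnectedOn G B' → B' = B

def NBL (l : List V) : Prop := ∀ i : ℕ, i + 2 < l.length → l[i]? ≠ l[i + 2]?

def pw (F : Sym2 V → ℝ) : List V → ℝ
  | [] => 0
  | [_] => 0
  | a :: b :: l => F s(a, b) + pw F (b :: l)

lemma pw_glue (F : Sym2 V → ℝ) {b : V} : ∀ {l1 l2 : List V}, l1.getLast? = some b →
    l2.head? = some b → pw F (l1 ++ l2.tail) = pw F l1 + pw F l2 := by
  intro l1
  induction l1 with
  | nil => intro l2 h1 _; simp at h1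
  | cons a t ih =>
    intro l2 h1 h2
    match t with
    | [] =>
      simp only [List.getLast?_singleton, Option.some.injEq] at h1
      match l2 with
      | [] => simp at h2
      | c :: t2 =>
        simp only [List.head?_cons, Option.some.injEq] at h2
        show pw F (a :: t2) = pw F [a] + pw F (c :: t2)
        rw [show c = a from h2.trans h1.symm]
        show pw F (a :: t2) = 0 + pw F (a :: t2)
        ring
    | c :: t' =>
      rw [List.getLast?_cons_cons] at h1
      have := ih (l2 := l2) h1 h2
      show pw F (a :: c :: (t' ++ l2.tail)) = pw F (a :: c :: t') + pw F l2
      rw [show a :: c :: (t' ++ l2.tail) = a :: ((c :: t') ++ l2.tail) from rfl]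
      show F s(a, c) + pw F ((c :: t') ++ l2.tail) = (F s(a,c) + pw F (c :: t')) + pw F l2
      rw [this]; ring

lemma pw_reverse (F : Sym2 V → ℝ) : ∀ (l : List V), pw F l.reverse = pw F l := by
  intro l
  induction l with
  | nil => rfl
  | cons a t ih =>
    match t with
    | [] => rfl
    | b :: t' =>
      have h1 : (b :: t').reverse.getLast? = some b := by
        rw [List.getLast?_reverse]; rfl
      have h2 : ([b, a] : List V).head? = some b := rfl
      have : pw F ((b :: t').reverse ++ [a]) = pw F (b :: t').reverse + pw F [b, a] :=
        pw_glue F h1 h2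
      rw [List.reverse_cons, this, ih]
      show pw F (b :: t') + (F s(b, a) + 0) = F s(a, b) + pw F (b :: t')
      rw [Sym2.eq_swap]; ring

lemma NBL.of_nodup {l : List V} (h : l.Nodup) : NBL l := by
  intro i hi heq
  rw [List.getElem?_eq_getElem (show i < l.length by omega),
    List.getElem?_eq_getElem (show i + 2 < l.length by omega), Option.some.injEq] at heq
  have := (h.getElem_inj_iff).mp heq
  omega

lemma NBL.reverse {l : List V} (h : NBL l) : NBL l.reverse := by
  intro i hi heq
  rw [List.length_reverse] at hi
  rw [List.getElem?_reverse (by omega), List.getElem?_reverse (by omega)] at heq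
  have h3 : l.length - 1 - (i + 2) + 2 = l.length - 1 - i := by omega
  exact h (l.length - 1 - (i + 2)) (by omega) (by rw [h3]; exact heq.symm)

lemma nbl_glue {l1 l2 : List V} {b : V} (h1 : NBL l1) (h2 : NBL l2)
    (hm : l1.getLast? = some b) (hh : l2.head? = some b)
    (hc : ∀ x ∈ l1.dropLast.getLast?, ∀ y ∈ l2.tail.head?, x ≠ y) :
    NBL (l1 ++ l2.tail) := by
  have hl1 : l1 ≠ [] := by rintro rfl; simp at hm
  have hl2 : l2 ≠ [] := by rintro rfl; simp at hh
  have hn1 : 1 ≤ l1.length := List.length_pos_iff.mpr hl1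
  have hn2 : 1 ≤ l2.length := List.length_pos_iff.mpr hl2
  intro i hi
  rw [List.length_append, List.length_tail] at hi
  rw [List.getElem?_append, List.getElem?_append]
  rcases lt_or_ge (i + 2) l1.length with hcase | hcase
  · rw [if_pos (by omega), if_pos (by omega)]
    exact h1 i (by omega)
  · rcases lt_or_ge i l1.length with hcase2 | hcase2
    · -- boundary
      rw [if_pos (by omega), if_neg (by omega)]
      rcases (by omega : i + 2 = l1.length ∨ i + 1 = l1.length) with he | he
      · -- i = n1 - 2 : l1[n1-2] vs l2.tail[0] = l2[1]
        have hx : l1[i]? = l1.dropLast.getLast? := by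
          rw [List.getLast?_eq_getElem?, List.getElem?_dropLast, List.length_dropLast,
            if_pos (by omega)]
          congr 1; omega
        intro heq
        have hy : l2.tail[i + 2 - l1.length]? = l2.tail.head? := by
          rw [List.head?_eq_getElem?]; congr 1; omega
        rw [hx, hy] at heq
        have hsome : l2.tail.head? = l2.tail[0]? := List.head?_eq_getElem?
        have h0 : (0:ℕ) < l2.tail.length := by rw [List.length_tail]; omega
        obtain ⟨yy, hyy⟩ : ∃ yy, l2.tail.head? = some yy := by
          rw [hsome]; exact ⟨_, List.getElem?_eq_getElem h0⟩
        rw [hyy] at heq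
        exact hc yy (heq ▸ rfl) yy hyy rfl
      · -- i = n1 - 1 : l1.getLast vs l2[2]
        have hx : l1[i]? = some b := by
          rw [← hm, List.getLast?_eq_getElem?]; congr 1; omega
        have hy : l2.tail[i + 2 - l1.length]? = l2[2]? := by
          rw [List.getElem?_tail]; congr 1; omega
        rw [hx, hy]
        have hb : l2[0]? = some b := by rw [← List.head?_eq_getElem?]; exact hh
        intro heq
        exact h2 0 (by omega) (by rw [hb, heq])
    · rw [if_neg (by omega), if_neg (by omega)]
      rw [List.getElem?_tail, List.getElem?_tail]
      have : i - l1.length + 1 + 2 = i + 2 - l1.length + 1 := by omega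
      rw [← this] at *
      exact h2 (i - l1.length + 1) (by omega)

lemma chain'_glue {R : V → V → Prop} {l1 l2 : List V} {b : V} (h1 : l1.IsChain R)
    (h2 : l2.IsChain R) (hm : l1.getLast? = some b) (hh : l2.head? = some b) :
    (l1 ++ l2.tail).IsChain R := by
  rw [List.isChain_append]
  refine ⟨h1, h2.tail, ?_⟩
  intro x hx y hy
  rw [hm, Option.mem_def, Option.some.injEq] at hx
  subst hx
  match l2, hh with
  | c :: t, hh =>
    simp only [List.head?_cons, Option.some.injEq] at hh
    subst hh
    match t, hy with
    | d :: t', hy =>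
      simp only [List.tail_cons, List.head?_cons, Option.mem_def, Option.some.injEq] at hy
      subst hy
      exact (List.isChain_cons_cons.mp h2).1

lemma getLast?_glue {l1 l2 : List V} {b : V} (hm : l1.getLast? = some b)
    (hh : l2.head? = some b) : (l1 ++ l2.tail).getLast? = l2.getLast? := by
  match l2, hh with
  | c :: t, hh =>
    simp only [List.head?_cons, Option.some.injEq] at hh
    subst hh
    match t with
    | [] => simpa using hm
    | d :: t' =>
      rw [List.tail_cons, List.getLast?_append_of_ne_nil _ (by simp), List.getLast?_cons_cons]

lemma head?_glue {l1 l2 : List V} {a : V} (hh : l1.head? = some a) :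
    (l1 ++ l2).head? = some a := by
  match l1, hh with
  | c :: t, hh => simpa using hh

lemma second?_glue {l1 l2 : List V} {a : V} (hh : l1.tail.head? = some a) :
    (l1 ++ l2).tail.head? = some a := by
  match l1 with
  | [] => simp at hh
  | c :: t =>
    match t with
    | [] => simp at hh
    | d :: t' => simpa using hh

lemma penult?_glue {l1 l2 : List V} {b : V} (h2 : 2 ≤ l2.length)
    (hm : l1.getLast? = some b) (hh : l2.head? = some b) :
    (l1 ++ l2.tail).dropLast.getLast? = l2.dropLast.getLast? := by
  match l2 with
  | c :: d :: t =>
    simp only [List.head?_cons, Option.some.injEq] at hh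
    subst hh
    rw [List.tail_cons, List.dropLast_append_of_ne_nil (by simp)]
    match t with
    | [] => simpa using hm
    | e :: t' =>
      rw [List.getLast?_append_of_ne_nil]
      · show _ = ((c :: (d :: e :: t').dropLast).getLast?)
        rw [show (d :: e :: t').dropLast = d :: (e :: t').dropLast from rfl,
          List.getLast?_cons_cons]
      · show d :: (e :: t').dropLast ≠ []
        simp

lemma penult?_reverse (l : List V) : l.reverse.dropLast.getLast? = l.tail.head? := by
  match l with
  | [] => rfl
  | [a] => rfl
  | a :: b :: t =>
    rw [List.reverse_cons, List.dropLast_concat, List.getLast?_reverse]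
    rfl

lemma second?_reverse (l : List V) : l.reverse.tail.head? = l.dropLast.getLast? := by
  have := penult?_reverse l.reverse
  rw [List.reverse_reverse] at this
  exact this.symm

/-! ### segments of an infinite sequence -/

def seg (f : ℕ → V) (s k : ℕ) : List V := (List.range k).map (fun t => f (s + t))

lemma seg_length (f : ℕ → V) (s k : ℕ) : (seg f s k).length = k := by
  simp [seg]

lemma seg_getElem? (f : ℕ → V) (s k i : ℕ) (h : i < k) :
    (seg f s k)[i]? = some (f (s + i)) := by
  rw [seg, List.getElem?_map, List.getElem?_range h, Option.map_some]

lemma seg_head? (f : ℕ → V) (s k : ℕ) (h : 1 ≤ k) : (seg f s k).head? = some (f s) := by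
  rw [List.head?_eq_getElem?, seg_getElem? f s k 0 (by omega), Nat.add_zero]

lemma seg_getLast? (f : ℕ → V) (s k : ℕ) (h : 1 ≤ k) :
    (seg f s k).getLast? = some (f (s + (k - 1))) := by
  rw [List.getLast?_eq_getElem?, seg_length, seg_getElem? f s k (k-1) (by omega)]

lemma seg_second? (f : ℕ → V) (s k : ℕ) (h : 2 ≤ k) :
    (seg f s k).tail.head? = some (f (s + 1)) := by
  rw [List.head?_eq_getElem?, List.getElem?_tail, seg_getElem? f s k 1 (by omega)]

lemma seg_penult? (f : ℕ → V) (s k : ℕ) (h : 2 ≤ k) :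
    (seg f s k).dropLast.getLast? = some (f (s + (k - 2))) := by
  rw [List.getLast?_eq_getElem?, List.getElem?_dropLast, List.length_dropLast, seg_length,
    if_pos (by omega), seg_getElem? f s k (k - 1 - 1) (by omega)]
  congr 3

lemma seg_chain' {G : SimpleGraph V} {f : ℕ → V} (hadj : ∀ n, G.Adj (f n) (f (n + 1)))
    (s k : ℕ) : (seg f s k).IsChain G.Adj := by
  rw [seg, List.isChain_map]
  match k with
  | 0 => simp
  | k + 1 =>
    rw [show k + 1 = k.succ from rfl, List.isChain_range_succ]
    intro m _
    exact (show s + (m+1) = s + m + 1 by omega) ▸ hadj (s + m)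

lemma seg_nbl {f : ℕ → V} (hnb : ∀ n, f n ≠ f (n + 2)) (s k : ℕ) : NBL (seg f s k) := by
  intro i hi
  rw [seg_length] at hi
  rw [seg_getElem? f s k i (by omega), seg_getElem? f s k (i+2) (by omega)]
  intro heq
  rw [Option.some.injEq] at heq
  exact hnb (s + i) (by rw [show s + i + 2 = s + (i + 2) by omega]; exact heq)

/-! ### walks from vertex lists -/

lemma exists_walk_of_support (G : SimpleGraph V) :
    ∀ (m : List V) (a b : V), m.head? = some a → m.getLast? = some b →
      m.IsChain G.Adj → ∃ p : G.Walk a b, p.support = m := by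
  intro m
  induction m with
  | nil => intro a b h1 _ _; simp at h1
  | cons c t ih =>
    intro a b h1 h2 hc
    simp only [List.head?_cons, Option.some.injEq] at h1
    match t with
    | [] =>
      simp only [List.getLast?_singleton, Option.some.injEq] at h2
      subst h1; subst h2
      exact ⟨SimpleGraph.Walk.nil, rfl⟩
    | d :: t' =>
      subst h1
      rw [List.getLast?_cons_cons] at h2
      obtain ⟨hadj, hc'⟩ := List.isChain_cons_cons.mp hc
      obtain ⟨q, hq⟩ := ih d b rfl h2 hc'
      exact ⟨SimpleGraph.Walk.cons hadj q, by simp [SimpleGraph.Walk.support_cons, hq]⟩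

lemma pw_cons_of_head? (F : Sym2 V → ℝ) {l : List V} {b : V} (h : l.head? = some b) (a : V) :
    pw F (a :: l) = F s(a, b) + pw F l := by
  match l with
  | c :: t =>
    simp only [List.head?_cons, Option.some.injEq] at h
    subst h
    rfl

lemma walk_head? {G : SimpleGraph V} {u v : V} (p : G.Walk u v) :
    p.support.head? = some u := by
  rw [p.support_eq_cons]; rfl

lemma walkWeight_eq_pw {G : SimpleGraph V} (F : Sym2 V → ℝ) {u v : V} (p : G.Walk u v) :
    walkWeight F p = pw F p.support := by
  induction p with
  | nil => rfl
  | cons h q ih =>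
    rw [SimpleGraph.Walk.support_cons, pw_cons_of_head? F (walk_head? q), ← ih]
    simp [walkWeight, SimpleGraph.Walk.edges_cons]

lemma walk_getLast? {G : SimpleGraph V} {u v : V} (p : G.Walk u v) :
    p.support.getLast? = some v := by
  rw [List.getLast?_eq_getLast (by simp), SimpleGraph.Walk.getLast_support]

lemma nonBacktracking_iff {G : SimpleGraph V} {u v : V} (p : G.Walk u v) :
    NonBacktracking p ↔ NBL p.support := Iff.rfl

/-! ### existence of non-backtracking closed walks -/

lemma exists_nb_closed {G : SimpleGraph V} [Fintype V] [DecidableRel G.Adj]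
    (hdeg : ∀ z : V, 3 ≤ G.degree z) (u a wv : V) (hua : G.Adj u a) (haw : a ≠ wv) :
    ∃ m : List V, m.head? = some u ∧ m.getLast? = some u ∧ m.tail.head? = some a ∧
      m.IsChain G.Adj ∧ NBL m ∧ (∀ b ∈ m.dropLast.getLast?, b ≠ wv) := by
  classical
  have hstep : ∀ p c : V, ∃ nxt : V, G.Adj c nxt ∧ nxt ≠ p ∧ ¬(c = wv ∧ nxt = u) := by
    intro p c
    set S : Finset V := {p, if c = wv then u else p} with hSdef
    have h2 : S.card ≤ 2 := by
      apply le_trans (Finset.card_insert_le _ _)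
      simp
    have h3 := Finset.le_card_sdiff S (G.neighborFinset c)
    have h1 : (G.neighborFinset c).card = G.degree c := G.card_neighborFinset_eq_degree c
    have hd := hdeg c
    have hpos : 0 < (G.neighborFinset c \ S).card := by omega
    obtain ⟨nxt, hn⟩ := Finset.card_pos.mp hpos
    rw [hSdef] at hn
    rw [Finset.mem_sdiff, SimpleGraph.mem_neighborFinset, Finset.mem_insert,
      Finset.mem_singleton] at hn
    push_neg at hn
    refine ⟨nxt, hn.1, hn.2.1, ?_⟩
    rintro ⟨hc, hnu⟩
    exact hn.2.2 (by rw [if_pos hc, hnu])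
  choose g hg using hstep
  let F2 : ℕ → V × V := fun n => Nat.rec (u, a) (fun _ pc => (pc.2, g pc.1 pc.2)) n
  let f : ℕ → V := fun n => (F2 n).1
  have hf0 : f 0 = u := rfl
  have hf1 : f 1 = a := rfl
  have hfs : ∀ n, f (n + 2) = g (f n) (f (n + 1)) := fun n => rfl
  have hadj : ∀ n, G.Adj (f n) (f (n + 1)) := by
    intro n
    match n with
    | 0 => exact hua
    | n + 1 =>
      rw [hfs n]
      exact (hg (f n) (f (n + 1))).1
  have hnb : ∀ n, f n ≠ f (n + 2) := by
    intro n
    rw [hfs n]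
    exact fun h => (hg (f n) (f (n + 1))).2.1 h.symm
  have hav : ∀ n, ¬(f n = wv ∧ f (n + 1) = u) := by
    intro n
    match n with
    | 0 => rintro ⟨h1, h2⟩; exact (G.ne_of_adj hua).symm h2
    | n + 1 =>
      rw [hfs n]
      exact (hg (f n) (f (n + 1))).2.2
  -- pigeonhole
  obtain ⟨n1, n2, hne, heqp⟩ := Finite.exists_ne_map_eq_of_infinite (fun n => (f n, f (n + 1)))
  have hQ : ∃ j, ∃ i, i < j ∧ f i = f j ∧ f (i + 1) = f (j + 1) := by
    rcases lt_or_gt_of_ne hne with h | h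
    · exact ⟨n2, n1, h, congrArg Prod.fst heqp, congrArg Prod.snd heqp⟩
    · exact ⟨n1, n2, h, (congrArg Prod.fst heqp).symm, (congrArg Prod.snd heqp).symm⟩
  obtain ⟨i0, hij, he1, he2⟩ := Nat.find_spec hQ
  set j0 := Nat.find hQ with hj0def
  have hmin : ∀ k, k < j0 → ¬ ∃ i, i < k ∧ f i = f k ∧ f (i + 1) = f (k + 1) :=
    fun k hk => Nat.find_min hQ hk
  have hgap : i0 + 3 ≤ j0 := by
    rcases (by omega : j0 = i0 + 1 ∨ j0 = i0 + 2 ∨ i0 + 3 ≤ j0) with h | h | h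
    · exact absurd (h ▸ he1) (G.ne_of_adj (hadj i0))
    · exact absurd (h ▸ he1) (hnb i0)
    · exact h
  have hkey : 1 ≤ i0 → f (i0 - 1) ≠ f (j0 - 1) := by
    intro h1 heqq
    apply hmin (j0 - 1) (by omega)
    refine ⟨i0 - 1, by omega, heqq, ?_⟩
    have e1 : i0 - 1 + 1 = i0 := by omega
    have e2 : j0 - 1 + 1 = j0 := by omega
    rw [e1, e2]
    exact he1
  rcases Nat.eq_zero_or_pos i0 with hi0 | hi0
  · -- base at u itself
    have hfj0 : f j0 = u := by rw [← he1, hi0, hf0]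
    refine ⟨seg f 0 (j0 + 1), ?_, ?_, ?_, seg_chain' hadj 0 (j0+1), seg_nbl hnb 0 (j0+1), ?_⟩
    · rw [seg_head? f 0 (j0 + 1) (by omega), hf0]
    · rw [seg_getLast? f 0 (j0 + 1) (by omega),
        show 0 + (j0 + 1 - 1) = j0 by omega, hfj0]
    · rw [seg_second? f 0 (j0 + 1) (by omega), show (0:ℕ) + 1 = 1 by omega, hf1]
    · intro b hb
      rw [seg_penult? f 0 (j0 + 1) (by omega), Option.mem_def, Option.some.injEq] at hb
      rw [show 0 + (j0 + 1 - 2) = j0 - 1 by omega] at hb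
      intro hbw
      exact hav (j0 - 1) ⟨by rw [hb]; exact hbw, by rw [show j0 - 1 + 1 = j0 by omega, hfj0]⟩
  · -- i0 ≥ 1 : lollipop
    set A := seg f 0 (i0 + 1) with hAdef
    set C := seg f i0 (j0 - i0 + 1) with hCdef
    have hA_head : A.head? = some u := by rw [hAdef, seg_head? f 0 (i0+1) (by omega), hf0]
    have hA_last : A.getLast? = some (f i0) := by
      rw [hAdef, seg_getLast? f 0 (i0+1) (by omega), show 0 + (i0 + 1 - 1) = i0 by omega]
    have hA_second : A.tail.head? = some a := by
      rw [hAdef, seg_second? f 0 (i0+1) (by omega), show (0:ℕ) + 1 = 1 by omega, hf1]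
    have hA_penult : A.dropLast.getLast? = some (f (i0 - 1)) := by
      rw [hAdef, seg_penult? f 0 (i0+1) (by omega), show 0 + (i0 + 1 - 2) = i0 - 1 by omega]
    have hC_head : C.head? = some (f i0) := by rw [hCdef, seg_head? f i0 _ (by omega)]
    have hC_last : C.getLast? = some (f j0) := by
      rw [hCdef, seg_getLast? f i0 _ (by omega), show i0 + (j0 - i0 + 1 - 1) = j0 by omega]
    have hC_second : C.tail.head? = some (f (i0 + 1)) := by
      rw [hCdef, seg_second? f i0 _ (by omega)]
    have hC_penult : C.dropLast.getLast? = some (f (j0 - 1)) := by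
      rw [hCdef, seg_penult? f i0 _ (by omega), show i0 + (j0 - i0 + 1 - 2) = j0 - 1 by omega]
    have hX_nbl : NBL (A ++ C.tail) := by
      refine nbl_glue (seg_nbl hnb 0 (i0+1)) (seg_nbl hnb i0 (j0-i0+1)) hA_last hC_head ?_
      intro x hx y hy
      rw [hA_penult, Option.mem_def, Option.some.injEq] at hx
      rw [hC_second, Option.mem_def, Option.some.injEq] at hy
      subst hx; subst hy
      have := hnb (i0 - 1)
      rwa [show i0 - 1 + 2 = i0 + 1 by omega] at this
    have hX_chain : (A ++ C.tail).IsChain G.Adj :=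
      chain'_glue (seg_chain' hadj 0 (i0+1)) (seg_chain' hadj i0 (j0-i0+1)) hA_last hC_head
    have hX_head : (A ++ C.tail).head? = some u := head?_glue hA_head
    have hX_last : (A ++ C.tail).getLast? = some (f i0) := by
      rw [getLast?_glue hA_last hC_head, hC_last, ← he1]
    have hX_second : (A ++ C.tail).tail.head? = some a := second?_glue hA_second
    have hX_penult : (A ++ C.tail).dropLast.getLast? = some (f (j0 - 1)) := by
      rw [penult?_glue (by rw [hCdef, seg_length]; omega) hA_last hC_head, hC_penult]
    have hAr_head : A.reverse.head? = some (f i0) := by rw [List.head?_reverse, hA_last]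
    have hAr_last : A.reverse.getLast? = some u := by rw [List.getLast?_reverse, hA_head]
    have hAr_second : A.reverse.tail.head? = some (f (i0 - 1)) := by
      rw [second?_reverse, hA_penult]
    have hAr_nbl : NBL A.reverse := (seg_nbl hnb 0 (i0+1)).reverse
    have hAr_chain : A.reverse.IsChain G.Adj := by
      rw [List.isChain_reverse]
      exact List.IsChain.imp (fun x y hxy => hxy.symm) (seg_chain' hadj 0 (i0+1))
    refine ⟨(A ++ C.tail) ++ A.reverse.tail, head?_glue hX_head, ?_, second?_glue hX_second,
      chain'_glue hX_chain hAr_chain hX_last hAr_head, nbl_glue hX_nbl hAr_nbl hX_last hAr_head ?_, ?_⟩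
    · rw [getLast?_glue hX_last hAr_head, hAr_last]
    · intro x hx y hy
      rw [hX_penult, Option.mem_def, Option.some.injEq] at hx
      rw [hAr_second, Option.mem_def, Option.some.injEq] at hy
      subst hx; subst hy
      exact fun h => hkey hi0 h.symm
    · intro b hb
      rw [penult?_glue (by rw [List.length_reverse, hAdef, seg_length]; omega) hX_last hAr_head,
        penult?_reverse, hA_second, Option.mem_def, Option.some.injEq] at hb
      rw [← hb]
      exact haw

/-! ### lollipop walks -/

lemma length_ge_two {l : List V} {a : V} (h : l.tail.head? = some a) : 2 ≤ l.length := by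
  match l with
  | [] => simp at h
  | [b] => simp at h
  | b :: c :: t => simp

lemma lollipop {G : SimpleGraph V} {v z : V} {sQ M : List V}
    (hQh : sQ.head? = some v) (hQl : sQ.getLast? = some z)
    (hQc : sQ.IsChain G.Adj) (hQn : NBL sQ)
    (hMh : M.head? = some z) (hMl : M.getLast? = some z)
    (hMc : M.IsChain G.Adj) (hMn : NBL M) (hMlen : 2 ≤ M.length)
    (hcross1 : ∀ p ∈ sQ.dropLast.getLast?, ∀ q ∈ M.tail.head?, p ≠ q)
    (hcross2 : ∀ p ∈ M.dropLast.getLast?, ∀ q ∈ sQ.dropLast.getLast?, p ≠ q) :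
    ∃ p : G.Walk v v, NonBacktracking p ∧
      ∀ F : Sym2 V → ℝ, walkWeight F p = 2 * pw F sQ + pw F M := by
  have hX_last : (sQ ++ M.tail).getLast? = some z := by
    rw [getLast?_glue hQl hMh, hMl]
  have hQr_head : sQ.reverse.head? = some z := by rw [List.head?_reverse, hQl]
  have hX_nbl : NBL (sQ ++ M.tail) := nbl_glue hQn hMn hQl hMh hcross1
  have hL_nbl : NBL ((sQ ++ M.tail) ++ sQ.reverse.tail) := by
    refine nbl_glue hX_nbl hQn.reverse hX_last hQr_head ?_
    intro p hp q hq
    rw [penult?_glue hMlen hQl hMh] at hp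
    rw [second?_reverse] at hq
    exact hcross2 p hp q hq
  have hL_chain : ((sQ ++ M.tail) ++ sQ.reverse.tail).IsChain G.Adj := by
    refine chain'_glue (chain'_glue hQc hMc hQl hMh) ?_ hX_last hQr_head
    rw [List.isChain_reverse]
    exact List.IsChain.imp (fun p q hpq => hpq.symm) hQc
  have hL_head : ((sQ ++ M.tail) ++ sQ.reverse.tail).head? = some v :=
    head?_glue (head?_glue hQh)
  have hL_last : ((sQ ++ M.tail) ++ sQ.reverse.tail).getLast? = some v := by
    rw [getLast?_glue hX_last hQr_head, List.getLast?_reverse, hQh]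
  obtain ⟨p, hp⟩ := exists_walk_of_support G _ v v hL_head hL_last hL_chain
  refine ⟨p, ?_, ?_⟩
  · rw [nonBacktracking_iff, hp]
    exact hL_nbl
  · intro F
    rw [walkWeight_eq_pw, hp, pw_glue F hX_last hQr_head, pw_glue F hQl hMh, pw_reverse]
    ring

lemma pick_nbr {G : SimpleGraph V} [Fintype V] [DecidableRel G.Adj]
    (hdeg : ∀ z : V, 3 ≤ G.degree z) (c s t : V) : ∃ z, G.Adj c z ∧ z ≠ s ∧ z ≠ t := by
  classical
  set S : Finset V := {s, t} with hSdef
  have h2 : S.card ≤ 2 := by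
    apply le_trans (Finset.card_insert_le _ _)
    simp
  have h3 := Finset.le_card_sdiff S (G.neighborFinset c)
  have h1 : (G.neighborFinset c).card = G.degree c := G.card_neighborFinset_eq_degree c
  have hd := hdeg c
  have hpos : 0 < (G.neighborFinset c \ S).card := by omega
  obtain ⟨z, hz⟩ := Finset.card_pos.mp hpos
  rw [hSdef] at hz
  rw [Finset.mem_sdiff, SimpleGraph.mem_neighborFinset, Finset.mem_insert,
    Finset.mem_singleton] at hz
  push_neg at hz
  exact ⟨z, hz.1, hz.2.1, hz.2.2⟩

/-! ### the main revelation lemma -/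

lemma main_reveal {G : SimpleGraph V} [Fintype V] [DecidableRel G.Adj]
    (hdeg : ∀ z : V, 3 ≤ G.degree z) (v x y : V) (hxy : G.Adj x y)
    (P : G.Walk v x) (hP : P.IsPath) (hy : y ∉ P.support) :
    RevealedBySet G {v} s(x, y) := by
  classical
  set sP := P.support with hsPdef
  have hheadP : sP.head? = some v := walk_head? P
  have hlastP : sP.getLast? = some x := walk_getLast? P
  have hchainP : sP.IsChain G.Adj := P.isChain_adj_support
  have hnodupP : sP.Nodup := hP.support_nodup
  have hnblP : NBL sP := NBL.of_nodup hnodupP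
  set wxV := sP.dropLast.getLast?.getD x with hwxV
  have hwx : ∀ p ∈ sP.dropLast.getLast?, p = wxV := by
    intro p hp
    rw [Option.mem_def] at hp
    rw [hwxV, hp, Option.getD_some]
  -- choose walks at x
  obtain ⟨a1, ha1adj, ha1w, -⟩ := pick_nbr hdeg x wxV wxV
  obtain ⟨m1, hm1h, hm1l, hm1s, hm1c, hm1n, hm1p⟩ := exists_nb_closed hdeg x a1 wxV ha1adj ha1w
  set r1V := m1.dropLast.getLast?.getD x with hr1V
  obtain ⟨a2, ha2adj, ha2w, ha2r⟩ := pick_nbr hdeg x wxV r1V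
  obtain ⟨m2, hm2h, hm2l, hm2s, hm2c, hm2n, hm2p⟩ := exists_nb_closed hdeg x a2 wxV ha2adj ha2w
  -- choose walks at y
  obtain ⟨b1, hb1adj, hb1x, -⟩ := pick_nbr hdeg y x x
  obtain ⟨m1', hm1h', hm1l', hm1s', hm1c', hm1n', hm1p'⟩ :=
    exists_nb_closed hdeg y b1 x hb1adj hb1x
  set r1V' := m1'.dropLast.getLast?.getD y with hr1V'
  obtain ⟨b2, hb2adj, hb2x, hb2r⟩ := pick_nbr hdeg y x r1V'
  obtain ⟨m2', hm2h', hm2l', hm2s', hm2c', hm2n', hm2p'⟩ :=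
    exists_nb_closed hdeg y b2 x hb2adj hb2x
  -- the extended path sP' = sP ++ [y]
  set sP' := sP ++ [y] with hsP'def
  have hheadP' : sP'.head? = some v := head?_glue hheadP
  have hlastP' : sP'.getLast? = some y := by
    rw [hsP'def, List.getLast?_append_of_ne_nil _ (by simp)]
    rfl
  have hchainP' : sP'.IsChain G.Adj := by
    have : ([x, y] : List V).IsChain G.Adj := by
      rw [List.isChain_pair]
      exact hxy
    exact chain'_glue hchainP this hlastP rfl
  have hnodupP' : sP'.Nodup := by
    rw [hsP'def, List.nodup_append]
    refine ⟨hnodupP, by simp, ?_⟩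
    intro b hb b' hb2
    simp only [List.mem_singleton] at hb2
    subst hb2
    exact fun h => hy (h ▸ hb)
  have hnblP' : NBL sP' := NBL.of_nodup hnodupP'
  have hpenP' : sP'.dropLast.getLast? = some x := by
    rw [hsP'def, List.dropLast_concat, hlastP]
  -- x-side glued middle M12
  have hM12_nbl : NBL (m1 ++ m2.tail) := by
    refine nbl_glue hm1n hm2n hm1l hm2h ?_
    intro p hp q hq
    rw [hm2s, Option.mem_def, Option.some.injEq] at hq
    subst hq
    have : p = r1V := by
      rw [Option.mem_def] at hp
      rw [hr1V, hp, Option.getD_some]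
    rw [this]
    exact fun h => ha2r h.symm
  have hM12_head : (m1 ++ m2.tail).head? = some x := head?_glue hm1h
  have hM12_last : (m1 ++ m2.tail).getLast? = some x := by
    rw [getLast?_glue hm1l hm2h, hm2l]
  have hM12_chain : (m1 ++ m2.tail).IsChain G.Adj := chain'_glue hm1c hm2c hm1l hm2h
  have hM12_second : (m1 ++ m2.tail).tail.head? = some a1 := second?_glue hm1s
  have hM12_penult : ∀ p ∈ (m1 ++ m2.tail).dropLast.getLast?, p ≠ wxV := by
    intro p hp
    rw [penult?_glue (length_ge_two hm2s) hm1l hm2h] at hp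
    exact hm2p p hp
  -- y-side glued middle M12'
  have hM12'_nbl : NBL (m1' ++ m2'.tail) := by
    refine nbl_glue hm1n' hm2n' hm1l' hm2h' ?_
    intro p hp q hq
    rw [hm2s', Option.mem_def, Option.some.injEq] at hq
    subst hq
    have : p = r1V' := by
      rw [Option.mem_def] at hp
      rw [hr1V', hp, Option.getD_some]
    rw [this]
    exact fun h => hb2r h.symm
  have hM12'_head : (m1' ++ m2'.tail).head? = some y := head?_glue hm1h'
  have hM12'_last : (m1' ++ m2'.tail).getLast? = some y := by
    rw [getLast?_glue hm1l' hm2h', hm2l']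
  have hM12'_chain : (m1' ++ m2'.tail).IsChain G.Adj := chain'_glue hm1c' hm2c' hm1l' hm2h'
  have hM12'_second : (m1' ++ m2'.tail).tail.head? = some b1 := second?_glue hm1s'
  have hM12'_penult : ∀ p ∈ (m1' ++ m2'.tail).dropLast.getLast?, p ≠ x := by
    intro p hp
    rw [penult?_glue (length_ge_two hm2s') hm1l' hm2h'] at hp
    exact hm2p' p hp
  -- cross conditions, x side
  have hc1 : ∀ (s2 : Option V) (aa : V), s2 = some aa → aa ≠ wxV →
      ∀ p ∈ sP.dropLast.getLast?, ∀ q ∈ s2, p ≠ q := by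
    intro s2 aa hs2 haa p hp q hq
    rw [hwx p hp]
    rw [hs2, Option.mem_def, Option.some.injEq] at hq
    subst hq
    exact fun h => haa h.symm
  have hc2 : ∀ (pen : Option V), (∀ p ∈ pen, p ≠ wxV) →
      ∀ p ∈ pen, ∀ q ∈ sP.dropLast.getLast?, p ≠ q := by
    intro pen hpen p hp q hq
    rw [hwx q hq]
    exact hpen p hp
  -- cross conditions, y side
  have hc1' : ∀ (s2 : Option V) (aa : V), s2 = some aa → aa ≠ x →
      ∀ p ∈ sP'.dropLast.getLast?, ∀ q ∈ s2, p ≠ q := by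
    intro s2 aa hs2 haa p hp q hq
    rw [hpenP', Option.mem_def, Option.some.injEq] at hp
    subst hp
    rw [hs2, Option.mem_def, Option.some.injEq] at hq
    subst hq
    exact fun h => haa h.symm
  have hc2' : ∀ (pen : Option V), (∀ p ∈ pen, p ≠ x) →
      ∀ p ∈ pen, ∀ q ∈ sP'.dropLast.getLast?, p ≠ q := by
    intro pen hpen p hp q hq
    rw [hpenP', Option.mem_def, Option.some.injEq] at hq
    subst hq
    exact hpen p hp
  -- the six walks
  obtain ⟨Wa, hWa_nb, hWa_w⟩ := lollipop hheadP hlastP hchainP hnblP hm1h hm1l hm1c hm1n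
    (length_ge_two hm1s) (hc1 _ a1 hm1s ha1w) (hc2 _ hm1p)
  obtain ⟨Wb, hWb_nb, hWb_w⟩ := lollipop hheadP hlastP hchainP hnblP hM12_head hM12_last
    hM12_chain hM12_nbl (length_ge_two hM12_second) (hc1 _ a1 hM12_second ha1w)
    (hc2 _ hM12_penult)
  obtain ⟨Wc, hWc_nb, hWc_w⟩ := lollipop hheadP hlastP hchainP hnblP hm2h hm2l hm2c hm2n
    (length_ge_two hm2s) (hc1 _ a2 hm2s ha2w) (hc2 _ hm2p)
  obtain ⟨Wa', hWa'_nb, hWa'_w⟩ := lollipop hheadP' hlastP' hchainP' hnblP' hm1h' hm1l' hm1c'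
    hm1n' (length_ge_two hm1s') (hc1' _ b1 hm1s' hb1x) (hc2' _ hm1p')
  obtain ⟨Wb', hWb'_nb, hWb'_w⟩ := lollipop hheadP' hlastP' hchainP' hnblP' hM12'_head
    hM12'_last hM12'_chain hM12'_nbl (length_ge_two hM12'_second)
    (hc1' _ b1 hM12'_second hb1x) (hc2' _ hM12'_penult)
  obtain ⟨Wc', hWc'_nb, hWc'_w⟩ := lollipop hheadP' hlastP' hchainP' hnblP' hm2h' hm2l' hm2c'
    hm2n' (length_ge_two hm2s') (hc1' _ b2 hm2s' hb2x) (hc2' _ hm2p')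
  -- weights
  have hpwP' : ∀ F : Sym2 V → ℝ, pw F sP' = pw F sP + F s(x, y) := by
    intro F
    have h2 : ([x, y] : List V).head? = some x := rfl
    rw [hsP'def, show (sP ++ [y]) = sP ++ ([x, y] : List V).tail from rfl,
      pw_glue F hlastP h2]
    simp [pw]
  refine ⟨6, fun _ => v, ![Wa', Wb', Wc', Wa, Wb, Wc], ![1, -1, 1, -1, 1, -1], 2,
    fun i => rfl, ?_, ?_, by norm_num, ?_⟩
  · intro i
    fin_cases i
    · exact hWa'_nb
    · exact hWb'_nb
    · exact hWc'_nb
    · exact hWa_nb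
    · exact hWb_nb
    · exact hWc_nb
  · intro i
    fin_cases i <;> decide
  · intro F
    have key : walkWeight F Wa' - walkWeight F Wb' + walkWeight F Wc'
        - walkWeight F Wa + walkWeight F Wb - walkWeight F Wc = 2 * F s(x, y) := by
      rw [hWa_w F, hWb_w F, hWc_w F, hWa'_w F, hWb'_w F, hWc'_w F, hpwP' F,
        pw_glue F hm1l hm2h, pw_glue F hm1l' hm2h']
      ring
    simp only [Fin.sum_univ_succ, Fin.sum_univ_zero, Matrix.cons_val_zero,
      Matrix.cons_val_succ, Int.cast_one, Int.cast_neg, Int.cast_ofNat]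
    linarith [key]


/-- in a graph of minimum degree at least 3, every edge of a maximal 2-connected
block `B` is revealed by every vertex of `B`. -/
theorem block_edges_revealed {G : SimpleGraph V} [Fintype V] [DecidableRel G.Adj]
    (hdeg : ∀ x, 3 ≤ G.degree x) (B : Set V) (hB : IsBlock G B) (v : V) (hv : v ∈ B) :
    ∀ e ∈ G.edgeSet, (∀ x ∈ e, x ∈ B) → RevealedBySet G {v} e := by
  classical
  intro e
  induction e using Sym2.ind with
  | _ x y =>
    intro he hmem
    have hxy : G.Adj x y := he
    have hxB : x ∈ B := hmem x (Sym2.mem_mk_left x y)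
    have hyB : y ∈ B := hmem y (Sym2.mem_mk_right x y)
    -- reachability from v to x in G
    have hreach : G.Reachable v x := by
      have hc : (G.induce B).Connected := hB.1.2.1
      have hr : (G.induce B).Reachable ⟨v, hv⟩ ⟨x, hxB⟩ := hc.preconnected _ _
      exact hr.map (SimpleGraph.Embedding.induce B).toHom
    obtain ⟨Q⟩ := hreach
    set Pw : G.Walk v x := (Q.toPath : G.Path v x).1 with hPwdef
    have hPwpath : Pw.IsPath := (Q.toPath : G.Path v x).2
    by_cases hyQ : y ∈ Pw.support
    · -- use the prefix ending at y, and swap the roles of x and y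
      have hxney : x ≠ y := G.ne_of_adj hxy
      set R : G.Walk v y := Pw.takeUntil y hyQ with hRdef
      have hRpath : R.IsPath := hPwpath.takeUntil hyQ
      have hxR : x ∉ R.support := by
        intro hxmem
        have hspec := Pw.take_spec hyQ
        have hsupp : Pw.support = R.support ++ (Pw.dropUntil y hyQ).support.tail := by
          rw [← SimpleGraph.Walk.support_append, hspec]
        have hnd := hPwpath.support_nodup
        rw [hsupp, List.nodup_append] at hnd
        have hxdrop : x ∈ (Pw.dropUntil y hyQ).support :=
          SimpleGraph.Walk.end_mem_support _
        have hxtail : x ∈ (Pw.dropUntil y hyQ).support.tail := by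
          have hcons := (Pw.dropUntil y hyQ).support_eq_cons
          rw [hcons] at hxdrop
          rcases List.mem_cons.mp hxdrop with h | h
          · exact absurd h hxney
          · exact h
        exact hnd.2.2 x hxmem x hxtail rfl
      have := main_reveal hdeg v y x hxy.symm R hRpath hxR
      rwa [Sym2.eq_swap] at this
    · exact main_reveal hdeg v x y hxy Pw hPwpath hyQ
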